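/- Let G : ℝᵏ → ℝⁿ and l be a nonnegative integer. Suppose there exist r ∈ ℝᵏ, nonzero c ∈ ℝᵏ, and a subset K ⊆ {1,…,n} with |K| ≤ l such that ‖(G(r+c) − G(r))_K‖₁ ≥ ‖(G(r+c) − G(r))_{Kᶜ}‖₁. Then there exist a ground truth z₀ ∈ ℝᵏ and an error vector e ∈ ℝⁿ with ‖e‖₀ ≤ l such that z₀ is not a unique minimizer of ‖G(z) − (G(z₀) + e)‖₁ over z ∈ ℝᵏ. -/
import Mathlib


/-- ℓ₁ recovery necessity: if for some `r`, nonzero `c` and index set `K` with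
`|K| ≤ l` the ℓ₁ mass of `G(r+c) − G(r)` on `K` is at least that on `Kᶜ`, then
there are a ground truth `z₀` and an `l`-sparse outlier `e` such that `z₀` is
not a unique minimizer of `‖G(z) − (G(z₀) + e)‖₁`. -/
theorem l1_recovery_necessary {k n : ℕ} (G : (Fin k → ℝ) → (Fin n → ℝ)) (l : ℕ)
    (hbad : ∃ r c : Fin k → ℝ, c ≠ 0 ∧ ∃ K : Finset (Fin n), K.card ≤ l ∧
      ∑ i ∈ Kᶜ, |G (r + c) i - G r i| ≤ ∑ i ∈ K, |G (r + c) i - G r i|) :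
    ∃ z₀ : Fin k → ℝ, ∃ e : Fin n → ℝ,
      (Finset.univ.filter fun i => e i ≠ 0).card ≤ l ∧
      ∃ z : Fin k → ℝ, z ≠ z₀ ∧
        ∑ i, |G z i - (G z₀ i + e i)| ≤ ∑ i, |G z₀ i - (G z₀ i + e i)| := by
  obtain ⟨r, c, hc, K, hK, hsum⟩ := hbad
  refine ⟨r, fun i => if i ∈ K then G (r + c) i - G r i else 0, ?_, r + c, ?_, ?_⟩
  · refine le_trans (Finset.card_le_card ?_) hK
    intro i hi
    simp only [Finset.mem_filter] at hi
    by_contra h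
    exact hi.2 (by simp [h])
  · intro h
    exact hc (by simpa using congrArg (· - r) h)
  · have h1 : ∑ i, |G (r + c) i - (G r i + if i ∈ K then G (r + c) i - G r i else 0)|
        = ∑ i ∈ Kᶜ, |G (r + c) i - G r i| := by
      rw [← Finset.sum_filter_add_sum_filter_not Finset.univ (· ∈ K)]
      have : ∀ i ∈ Finset.univ.filter (· ∈ K),
          |G (r + c) i - (G r i + if i ∈ K then G (r + c) i - G r i else 0)| = 0 := by
        intro i hi
        simp only [Finset.mem_filter] at hi
        simp [hi.2]
      rw [Finset.sum_congr rfl this, Finset.sum_const_zero, zero_add]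
      refine Finset.sum_congr (by ext i; simp) ?_
      intro i hi
      rw [Finset.mem_compl] at hi
      simp [hi]
    have h2 : ∑ i, |G r i - (G r i + if i ∈ K then G (r + c) i - G r i else 0)|
        = ∑ i ∈ K, |G (r + c) i - G r i| := by
      rw [← Finset.sum_filter_add_sum_filter_not Finset.univ (· ∈ K)]
      have h3 : ∀ i ∈ Finset.univ.filter (¬ · ∈ K),
          |G r i - (G r i + if i ∈ K then G (r + c) i - G r i else 0)| = 0 := by
        intro i hi
        simp only [Finset.mem_filter] at hi
        simp [hi.2]
      rw [Finset.sum_congr rfl h3, Finset.sum_const_zero, add_zero]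
      refine Finset.sum_congr (by ext i; simp) ?_
      intro i hi
      rw [if_pos hi, abs_sub_comm]
      ring_nf
    rw [h1, h2]
    exact hsum
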